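/- arXiv:1503.06757 — 2 statements merged into one kernel-verified Lean document; each statement's English description precedes it below -/
import Mathlib

section
/- For a nonempty subset B ⊊ X of an energy landscape, the maximum depth of B, defined as the maximum over maximal cycles C ⊆ B of the depth Γ(C), equals max_{x∈B} { min_{y ∈ X∖B} Φ(x,y) − H(x) }. -/
/- Abstract energy landscape: finite state space `X`, energy `H`, connectivity `q`. -/

variable {X : Type*}

/-- A path from `x` to `y`: a nonempty finite sequence of states with consecutive
states connected by `q`. -/
def IsPath (q : X → X → Prop) (ω : List X) (x y : X) : Prop :=
  ω ≠ [] ∧ ω.Chain' q ∧ ω.head? = some x ∧ ω.getLast? = some y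

/-- The elevation (height) of a path: the maximal energy along it. -/
noncomputable def elev (H : X → ℝ) (ω : List X) : ℝ :=
  sSup (H '' {z | z ∈ ω})

/-- The communication energy between two states: the minimal elevation over paths. -/
noncomputable def commE (H : X → ℝ) (q : X → X → Prop) (x y : X) : ℝ :=
  sInf {e | ∃ ω, IsPath q ω x y ∧ elev H ω = e}

/-- The communication energy between two sets of states. -/
noncomputable def commSet (H : X → ℝ) (q : X → X → Prop) (A B : Set X) : ℝ :=
  sInf {e | ∃ x ∈ A, ∃ y ∈ B, commE H q x y = e}

/-- A set of states is connected if any two of its states are joined by a path inside it. -/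
def SetConn (q : X → X → Prop) (C : Set X) : Prop :=
  ∀ x ∈ C, ∀ y ∈ C, ∃ ω, IsPath q ω x y ∧ ∀ z ∈ ω, z ∈ C

/-- The external boundary of a set of states. -/
def extBdry (q : X → X → Prop) (C : Set X) : Set X :=
  {y | y ∉ C ∧ ∃ x ∈ C, q x y}

/-- A non-trivial cycle: a connected set whose maximal internal energy is strictly
below the minimal energy on its external boundary. -/
def IsNontrivialCycle (H : X → ℝ) (q : X → X → Prop) (C : Set X) : Prop :=
  C.Nonempty ∧ SetConn q C ∧ sSup (H '' C) < sInf (H '' extBdry q C)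

/-- A cycle: a singleton, or a non-trivial cycle. -/
def IsCycle (H : X → ℝ) (q : X → X → Prop) (C : Set X) : Prop :=
  (∃ x, C = {x}) ∨ IsNontrivialCycle H q C

/-- The communication energy between a state and a set of states. -/
noncomputable def commA (H : X → ℝ) (q : X → X → Prop) (x : X) (A : Set X) : ℝ :=
  sInf {e | ∃ y ∈ A, commE H q x y = e}

/-- `C` is a maximal cycle contained in `B`. -/
def MaxCycleIn (H : X → ℝ) (q : X → X → Prop) (B C : Set X) : Prop :=
  IsCycle H q C ∧ C ⊆ B ∧ ∀ C', IsCycle H q C' → C' ⊆ B → C ⊆ C' → C' = C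

/-- The depth of a cycle, `Γ(C) = Φ(C, X∖C) − min_{x∈C} H(x)`
(valid for trivial and non-trivial cycles alike). -/
noncomputable def depth (H : X → ℝ) (q : X → X → Prop) (C : Set X) : ℝ :=
  commSet H q C Cᶜ - sInf (H '' C)

/-- The maximum depth of a set: the maximum depth of a maximal cycle contained in it. -/
noncomputable def maxDepth (H : X → ℝ) (q : X → X → Prop) (B : Set X) : ℝ :=
  sSup {d | ∃ C, MaxCycleIn H q B C ∧ depth H q C = d}

section basics
variable {q : X → X → Prop} {H : X → ℝ} {ω : List X} {x y : X}

lemma IsPath.ne_nil (h : IsPath q ω x y) : ω ≠ [] := h.1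

lemma IsPath.mem_head (h : IsPath q ω x y) : x ∈ ω :=
  List.mem_of_mem_head? (by rw [h.2.2.1]; rfl)

lemma IsPath.mem_last (h : IsPath q ω x y) : y ∈ ω :=
  List.mem_of_mem_getLast? (by rw [h.2.2.2]; rfl)

lemma isPath_singleton (q : X → X → Prop) (x : X) : IsPath q [x] x x :=
  ⟨by simp, List.isChain_singleton x, rfl, rfl⟩

lemma isPath_pair {x y : X} (h : q x y) : IsPath q [x, y] x y :=
  ⟨by simp, List.isChain_pair.mpr h, rfl, rfl⟩

lemma le_elev (hz : x ∈ ω) : H x ≤ elev H ω := by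
  apply le_csSup ((ω.finite_toSet.image H).bddAbove)
  exact ⟨x, hz, rfl⟩

lemma elev_le {b : ℝ} (hne : ω ≠ []) (hb : ∀ z ∈ ω, H z ≤ b) : elev H ω ≤ b := by
  apply csSup_le
  · obtain ⟨a, ha⟩ := List.exists_mem_of_ne_nil ω hne
    exact ⟨H a, a, ha, rfl⟩
  · rintro e ⟨z, hz, rfl⟩; exact hb z hz

lemma elev_mem_range (hne : ω ≠ []) : elev H ω ∈ Set.range H := by
  have h : elev H ω ∈ H '' {z | z ∈ ω} := by
    apply Set.Nonempty.csSup_mem _ (ω.finite_toSet.image H)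
    obtain ⟨a, ha⟩ := List.exists_mem_of_ne_nil ω hne
    exact ⟨H a, a, ha, rfl⟩
  obtain ⟨z, _, hz⟩ := h
  exact ⟨z, hz⟩

lemma isPath_reverse (hsymm : ∀ x y, q x y → q y x) (h : IsPath q ω x y) :
    IsPath q ω.reverse y x := by
  obtain ⟨hne, hc, hh, hl⟩ := h
  refine ⟨by simpa using hne, ?_, ?_, ?_⟩
  · change List.IsChain _ _; rw [List.isChain_reverse]
    exact hc.imp (fun a b hab => hsymm _ _ hab)
  · rw [List.head?_reverse]; exact hl
  · rw [List.getLast?_reverse]; exact hh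

lemma isPath_prefix (h : IsPath q ω x y) {w : X} (hw : w ∈ ω) :
    ∃ ω', IsPath q ω' x w ∧ ∀ u ∈ ω', u ∈ ω := by
  obtain ⟨s, t, rfl⟩ := List.append_of_mem hw
  refine ⟨s ++ [w], ⟨by simp, ?_, ?_, ?_⟩, ?_⟩
  · refine h.2.1.prefix ?_
    exact ⟨t, by simp⟩
  · have := h.2.2.1
    cases s with
    | nil => simpa using this
    | cons a s' => simpa using this
  · simp
  · intro u hu
    simp only [List.mem_append, List.mem_cons] at hu ⊢
    rcases hu with h1 | h1
    · exact Or.inl h1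
    · simp at h1; exact Or.inr (Or.inl h1)

lemma isPath_append {z : X} {ω₁ ω₂ : List X} (h1 : IsPath q ω₁ x y) (h2 : IsPath q ω₂ y z) :
    ∃ ω, IsPath q ω x z ∧ ∀ u ∈ ω, u ∈ ω₁ ∨ u ∈ ω₂ := by
  obtain ⟨hne1, hc1, hh1, hl1⟩ := h1
  obtain ⟨hne2, hc2, hh2, hl2⟩ := h2
  refine ⟨ω₁ ++ ω₂.tail, ⟨by simp [hne1], ?_, ?_, ?_⟩, ?_⟩
  · change List.IsChain _ _; rw [List.isChain_append]
    refine ⟨hc1, hc2.tail, ?_⟩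
    intro a ha b hb
    rw [hl1] at ha
    simp at ha; subst ha
    cases ω₂ with
    | nil => simp at hne2
    | cons c t =>
      simp at hh2; subst hh2
      cases t with
      | nil => simp at hb
      | cons d t' =>
        simp at hb; subst hb
        exact (List.isChain_cons_cons.mp hc2).1
  · cases ω₁ with
    | nil => simp at hne1
    | cons a t => simpa using hh1
  · cases ω₂ with
    | nil => simp at hne2
    | cons c t =>
      cases t with
      | nil =>
        simp at hl2 hh2; subst hh2; subst hl2
        simpa using hl1
      | cons d t' =>
        have hdt : (d::t').getLast? = some z := by simpa using hl2
        rw [List.getLast?_append]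
        simp only [List.tail_cons, hdt]
        rfl
  · intro u hu
    rcases List.mem_append.mp hu with h | h
    · exact Or.inl h
    · exact Or.inr (List.mem_of_mem_tail h)

/-- A path from inside `D` to outside `D` crosses the external boundary. -/
lemma crossing {D : Set X} :
    ∀ (ω : List X) (x y : X), IsPath q ω x y → x ∈ D → y ∉ D →
      ∃ w ∈ ω, w ∈ extBdry q D := by
  intro ω
  induction ω with
  | nil => rintro x y ⟨h, -⟩ _ _; exact absurd rfl h
  | cons a t ih =>
    rintro x y ⟨-, hc, hh, hl⟩ hx hy
    simp only [List.head?_cons, Option.some.injEq] at hh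
    subst hh
    cases t with
    | nil =>
      simp only [List.getLast?_singleton, Option.some.injEq] at hl
      subst hl; exact absurd hx hy
    | cons b t' =>
      by_cases hb : b ∈ D
      · obtain ⟨w, hw, hwb⟩ := ih b y ⟨by simp, hc.tail, rfl, by simpa using hl⟩ hb hy
        exact ⟨w, List.mem_cons_of_mem _ hw, hwb⟩
      · exact ⟨b, by simp, hb, a, hx, (List.isChain_cons_cons.mp hc).1⟩

end basics

section comm
variable [Finite X] {H : X → ℝ} {q : X → X → Prop} {x y : X}

lemma commE_set_finite (x y : X) :
    {e | ∃ ω, IsPath q ω x y ∧ elev H ω = e}.Finite := by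
  apply (Set.finite_range H).subset
  rintro e ⟨ω, hω, rfl⟩
  exact elev_mem_range hω.ne_nil

lemma commE_spec (hirr : ∀ x y : X, ∃ ω, IsPath q ω x y) (x y : X) :
    ∃ ω, IsPath q ω x y ∧ elev H ω = commE H q x y := by
  have hne : {e | ∃ ω, IsPath q ω x y ∧ elev H ω = e}.Nonempty := by
    obtain ⟨ω, hω⟩ := hirr x y
    exact ⟨elev H ω, ω, hω, rfl⟩
  exact hne.csInf_mem (commE_set_finite x y)

lemma commE_le_elev {ω : List X} (hω : IsPath q ω x y) : commE H q x y ≤ elev H ω :=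
  csInf_le (commE_set_finite x y).bddBelow ⟨ω, hω, rfl⟩

end comm

section main
variable [Finite X] {H : X → ℝ} {q : X → X → Prop}

omit [Finite X] in
lemma IsCycle.nonempty {C : Set X} (h : IsCycle H q C) : C.Nonempty := by
  rcases h with ⟨c, rfl⟩ | h
  · exact ⟨c, rfl⟩
  · exact h.1

lemma commSet_set_finite (A B : Set X) :
    {e | ∃ x ∈ A, ∃ y ∈ B, commE H q x y = e}.Finite := by
  apply (Set.finite_range (Function.uncurry (commE H q))).subset
  rintro e ⟨a, -, b, -, rfl⟩
  exact ⟨(a, b), rfl⟩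

lemma commA_set_finite (x : X) (A : Set X) :
    {e | ∃ y ∈ A, commE H q x y = e}.Finite := by
  apply (Set.finite_range (commE H q x)).subset
  rintro e ⟨b, -, rfl⟩
  exact ⟨b, rfl⟩

lemma exists_maxCycleIn {B : Set X} {x : X} (hx : x ∈ B) :
    ∃ C, MaxCycleIn H q B C ∧ x ∈ C := by
  have hS : {C : Set X | IsCycle H q C ∧ C ⊆ B ∧ x ∈ C}.Finite := Set.toFinite _
  have hne : {C : Set X | IsCycle H q C ∧ C ⊆ B ∧ x ∈ C}.Nonempty :=
    ⟨{x}, Or.inl ⟨x, rfl⟩, by simpa using hx, rfl⟩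
  obtain ⟨C, ⟨hcyc, hsub, hxC⟩, hmax⟩ := hS.exists_maximalFor id _ hne
  refine ⟨C, ⟨hcyc, hsub, ?_⟩, hxC⟩
  intro C' hcyc' hsub' hCC'
  exact Set.Subset.antisymm (hmax ⟨hcyc', hsub', hCC' hxC⟩ hCC') hCC'

/-- Key lemma: from any point of a maximal cycle `C` in `B`, one can exit `B`
by a path whose elevation does not exceed `Φ(C, Cᶜ)`. -/
lemma key_exit (hsymm : ∀ x y, q x y → q y x) (hirr : ∀ x y : X, ∃ ω, IsPath q ω x y)
    {B C : Set X} (hBne : B ≠ Set.univ) (hC : MaxCycleIn H q B C) {x : X} (hx : x ∈ C) :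
    ∃ y ∈ Bᶜ, ∃ ω, IsPath q ω x y ∧ ∀ u ∈ ω, H u ≤ commSet H q C Cᶜ := by
  set Λ := commSet H q C Cᶜ with hΛdef
  obtain ⟨b₀, hb₀⟩ : ∃ b, b ∉ B := by
    by_contra h; push_neg at h
    exact hBne (Set.eq_univ_of_forall h)
  have hCsub : C ⊆ B := hC.2.1
  -- Φ(C, Cᶜ) is attained
  have hTne : {e | ∃ a ∈ C, ∃ b ∈ Cᶜ, commE H q a b = e}.Nonempty :=
    ⟨commE H q x b₀, x, hx, b₀, fun hb => hb₀ (hCsub hb), rfl⟩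
  obtain ⟨x', hx', y', hy', hcomm⟩ := hTne.csInf_mem (commSet_set_finite C Cᶜ)
  obtain ⟨ωs, hωs, helev⟩ := commE_spec hirr x' y'
  have hΛeq : sInf {e | ∃ a ∈ C, ∃ b ∈ Cᶜ, commE H q a b = e} = Λ := rfl
  rw [hcomm, hΛeq] at helev
  have hωs_le : ∀ u ∈ ωs, H u ≤ Λ := fun u hu => helev ▸ le_elev hu
  -- every point of C lies below Λ
  have hC_le : ∀ z ∈ C, H z ≤ Λ := by
    rcases hC.1 with ⟨c, hceq⟩ | ⟨hne, hconn, hlt⟩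
    · intro z hz
      rw [hceq] at hz hx'
      simp at hz hx'
      subst hz; subst hx'
      exact hωs_le _ hωs.mem_head
    · intro z hz
      obtain ⟨w, hwω, hwb⟩ := crossing ωs x' y' hωs hx' hy'
      have h1 : H z ≤ sSup (H '' C) :=
        le_csSup ((Set.toFinite C).image H).bddAbove ⟨z, hz, rfl⟩
      have h2 : sInf (H '' extBdry q C) ≤ H w :=
        csInf_le ((Set.toFinite _).image H).bddBelow ⟨w, hwb, rfl⟩
      exact le_trans h1 (le_trans (le_of_lt hlt) (le_trans h2 (hωs_le w hwω)))
  -- every point of C is reachable from x below Λ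
  have hreachC : ∀ z ∈ C, ∃ ω, IsPath q ω x z ∧ ∀ u ∈ ω, H u ≤ Λ := by
    intro z hz
    rcases hC.1 with ⟨c, hceq⟩ | ⟨hne, hconn, hlt⟩
    · rw [hceq] at hz hx
      simp at hz hx; subst hz; subst hx
      exact ⟨[x], isPath_singleton q x, by simpa using hC_le x (by rw [hceq]; rfl)⟩
    · obtain ⟨ω, hω, hmem⟩ := hconn x hx z hz
      exact ⟨ω, hω, fun u hu => hC_le u (hmem u hu)⟩
  -- y' is reachable from x below Λ
  have hy'reach : ∃ ω, IsPath q ω x y' ∧ ∀ u ∈ ω, H u ≤ Λ := by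
    obtain ⟨ω₁, hω₁, hb₁⟩ := hreachC x' hx'
    obtain ⟨ω, hω, hmem⟩ := isPath_append hω₁ hωs
    refine ⟨ω, hω, fun u hu => ?_⟩
    rcases hmem u hu with h | h
    · exact hb₁ u h
    · exact hωs_le u h
  -- the reachable-below-Λ set D
  set D := {z | ∃ ω, IsPath q ω x z ∧ ∀ u ∈ ω, H u ≤ Λ} with hDdef
  by_cases hexit : ∃ y ∈ Bᶜ, y ∈ D
  · obtain ⟨y, hyB, hyD⟩ := hexit
    exact ⟨y, hyB, hyD⟩
  push_neg at hexit
  have hDB : D ⊆ B := by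
    intro z hz
    by_contra h
    exact hexit z h hz
  exfalso
  have hxD : x ∈ D := by
    obtain ⟨ω, hω, hb⟩ := hreachC x hx; exact ⟨ω, hω, hb⟩
  have hy'D : y' ∈ D := hy'reach
  -- D is closed under path-membership
  have hDclosed : ∀ z ∈ D, ∀ ω, IsPath q ω x z → (∀ u ∈ ω, H u ≤ Λ) → ∀ u ∈ ω, u ∈ D := by
    rintro z - ω hω hb u hu
    obtain ⟨ω', hω', hmem⟩ := isPath_prefix hω hu
    exact ⟨ω', hω', fun v hv => hb v (hmem v hv)⟩
  have hD_le : ∀ z ∈ D, H z ≤ Λ := by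
    rintro z ⟨ω, hω, hb⟩
    exact hb z hω.mem_last
  -- D is connected
  have hDconn : SetConn q D := by
    rintro z ⟨ωz, hωz, hbz⟩ w ⟨ωw, hωw, hbw⟩
    obtain ⟨ω, hω, hmem⟩ := isPath_append (isPath_reverse hsymm hωz) hωw
    refine ⟨ω, hω, fun u hu => ?_⟩
    rcases hmem u hu with h | h
    · exact hDclosed z ⟨ωz, hωz, hbz⟩ ωz hωz hbz u (List.mem_reverse.mp h)
    · exact hDclosed w ⟨ωw, hωw, hbw⟩ ωw hωw hbw u h
  -- boundary of D is above Λ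
  have hDbdry : ∀ w ∈ extBdry q D, Λ < H w := by
    rintro w ⟨hwD, z, hzD, hqzw⟩
    by_contra h
    push_neg at h
    obtain ⟨ωz, hωz, hbz⟩ := hzD
    obtain ⟨ω, hω, hmem⟩ := isPath_append hωz (isPath_pair hqzw)
    refine hwD ⟨ω, hω, fun u hu => ?_⟩
    rcases hmem u hu with h1 | h1
    · exact hbz u h1
    · rcases List.mem_pair.mp h1 with rfl | rfl
      · exact hbz u hωz.mem_last
      · exact h
  -- boundary of D is nonempty
  have hDbdry_ne : (extBdry q D).Nonempty := by
    obtain ⟨ω, hω⟩ := hirr x b₀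
    obtain ⟨w, -, hwb⟩ := crossing ω x b₀ hω hxD (fun h => hb₀ (hDB h))
    exact ⟨w, hwb⟩
  -- D is a nontrivial cycle
  have hDcyc : IsCycle H q D := by
    refine Or.inr ⟨⟨x, hxD⟩, hDconn, ?_⟩
    have h1 : sSup (H '' D) ≤ Λ := by
      refine csSup_le ⟨H x, x, hxD, rfl⟩ ?_
      rintro e ⟨z, hz, rfl⟩
      exact hD_le z hz
    have h2 : Λ < sInf (H '' extBdry q D) := by
      have hmem : sInf (H '' extBdry q D) ∈ H '' extBdry q D :=
        (hDbdry_ne.image H).csInf_mem ((Set.toFinite _).image H)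
      obtain ⟨w, hw, heq⟩ := hmem
      rw [← heq]
      exact hDbdry w hw
    exact lt_of_le_of_lt h1 h2
  -- contradiction with maximality
  have hCD : C ⊆ D := fun z hz => hreachC z hz
  have := hC.2.2 D hDcyc hDB hCD
  rw [this] at hy'D
  exact hy' hy'D

end main

/-- equivalent characterization of the maximum depth,
`Γ̃(B) = max_{x∈B} { min_{y∈X∖B} Φ(x,y) − H(x) }`. -/
theorem max_depth_characterization [Fintype X] (H : X → ℝ) (q : X → X → Prop)
    (hsymm : ∀ x y, q x y → q y x)
    (hirr : ∀ x y : X, ∃ ω, IsPath q ω x y)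
    (B : Set X) (hB : B.Nonempty) (hBne : B ≠ Set.univ) :
    maxDepth H q B = sSup {d | ∃ x ∈ B, commA H q x Bᶜ - H x = d} := by
  obtain ⟨x₀, hx₀⟩ := hB
  obtain ⟨b₀, hb₀⟩ : ∃ b, b ∉ B := by
    by_contra h; push_neg at h
    exact hBne (Set.eq_univ_of_forall h)
  have hLfin : {d | ∃ C, MaxCycleIn H q B C ∧ depth H q C = d}.Finite := by
    apply (Set.finite_range (depth H q)).subset
    rintro d ⟨C, -, rfl⟩; exact ⟨C, rfl⟩
  have hRfin : {d | ∃ x ∈ B, commA H q x Bᶜ - H x = d}.Finite := by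
    apply (Set.finite_range (fun x => commA H q x Bᶜ - H x)).subset
    rintro d ⟨x, -, rfl⟩; exact ⟨x, rfl⟩
  have hLne : {d | ∃ C, MaxCycleIn H q B C ∧ depth H q C = d}.Nonempty := by
    obtain ⟨C₀, hC₀, -⟩ := exists_maxCycleIn (H := H) (q := q) hx₀
    exact ⟨depth H q C₀, C₀, hC₀, rfl⟩
  have hRne : {d | ∃ x ∈ B, commA H q x Bᶜ - H x = d}.Nonempty :=
    ⟨commA H q x₀ Bᶜ - H x₀, x₀, hx₀, rfl⟩
  rw [maxDepth]
  apply le_antisymm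
  · refine csSup_le hLne ?_
    rintro d ⟨C, hC, rfl⟩
    have hCne : C.Nonempty := hC.1.nonempty
    obtain ⟨xm, hxm, hHm⟩ := (hCne.image H).csInf_mem ((Set.toFinite C).image H)
    have hAmem : sInf {e | ∃ y ∈ Bᶜ, commE H q xm y = e} ∈
        {e | ∃ y ∈ Bᶜ, commE H q xm y = e} := by
      refine Set.Nonempty.csInf_mem ⟨commE H q xm b₀, b₀, hb₀, rfl⟩ (commA_set_finite xm Bᶜ)
    obtain ⟨y₀, hy₀, hy₀e⟩ := hAmem
    have hy₀C : y₀ ∈ Cᶜ := fun h => hy₀ (hC.2.1 h)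
    have h1 : commSet H q C Cᶜ ≤ commE H q xm y₀ :=
      csInf_le (commSet_set_finite C Cᶜ).bddBelow ⟨xm, hxm, y₀, hy₀C, rfl⟩
    have h2 : commE H q xm y₀ = commA H q xm Bᶜ := hy₀e
    have h3 : depth H q C ≤ commA H q xm Bᶜ - H xm := by
      rw [depth, ← hHm]
      exact sub_le_sub_right (h2 ▸ h1) _
    refine le_trans h3 (le_csSup hRfin.bddAbove ⟨xm, hC.2.1 hxm, rfl⟩)
  · refine csSup_le hRne ?_
    rintro d ⟨x, hx, rfl⟩
    obtain ⟨C, hC, hxC⟩ := exists_maxCycleIn (H := H) (q := q) hx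
    obtain ⟨y, hyB, ω, hω, hb⟩ := key_exit hsymm hirr hBne hC hxC
    have h1 : commA H q x Bᶜ ≤ commE H q x y :=
      csInf_le (commA_set_finite x Bᶜ).bddBelow ⟨y, hyB, rfl⟩
    have h2 : commE H q x y ≤ commSet H q C Cᶜ :=
      le_trans (commE_le_elev hω) (elev_le hω.ne_nil hb)
    have h3 : sInf (H '' C) ≤ H x :=
      csInf_le ((Set.toFinite C).image H).bddBelow ⟨x, hxC, rfl⟩
    have h4 : commA H q x Bᶜ - H x ≤ depth H q C := by
      rw [depth]
      exact sub_le_sub (le_trans h1 h2) h3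
    exact le_trans h4 (le_csSup hLfin.bddAbove ⟨C, hC, rfl⟩)
end

section
/- The relevant cycle C^+_A(x) admits the equivalent characterization C^+_A(x) = { y ∈ X : Φ(x,y) ≤ Φ(x,A) }. -/
/- Abstract energy landscape: finite state space `X`, energy `H`, connectivity `q`. -/

variable {X : Type*}

/-- The initial cycle `C_A(x) = {x} ∪ {z : Φ(x,z) < Φ(x,A)}`. -/
def initCycle (H : X → ℝ) (q : X → X → Prop) (A : Set X) (x : X) : Set X :=
  {x} ∪ {z | commE H q x z < commA H q x A}

section AuxEnergy

variable {X : Type*} (H : X → ℝ) (q : X → X → Prop)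

lemma aux_elevSet_finite [Fintype X] (x y : X) :
    {e | ∃ ω, IsPath q ω x y ∧ elev H ω = e}.Finite := by
  apply Set.Finite.subset (Set.Finite.image (fun s : Set X => sSup (H '' s)) Set.finite_univ)
  rintro e ⟨ω, _, rfl⟩
  exact ⟨{z | z ∈ ω}, trivial, rfl⟩

lemma aux_commE_exists [Fintype X] (hirr : ∀ x y : X, ∃ ω, IsPath q ω x y) (x y : X) :
    ∃ ω, IsPath q ω x y ∧ elev H ω = commE H q x y := by
  have hne : {e | ∃ ω, IsPath q ω x y ∧ elev H ω = e}.Nonempty := by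
    obtain ⟨ω, h⟩ := hirr x y; exact ⟨elev H ω, ω, h, rfl⟩
  exact hne.csInf_mem (aux_elevSet_finite H q x y)

lemma aux_commE_le [Fintype X] {x y : X} {ω : List X} (h : IsPath q ω x y) :
    commE H q x y ≤ elev H ω :=
  csInf_le (aux_elevSet_finite H q x y).bddBelow ⟨ω, h, rfl⟩

lemma aux_le_elev {ω : List X} {z : X} (hz : z ∈ ω) : H z ≤ elev H ω :=
  le_csSup (ω.finite_toSet.image H).bddAbove ⟨z, hz, rfl⟩

lemma aux_elev_mono {ω ω' : List X} (hne : ω ≠ []) (h : ∀ z ∈ ω, z ∈ ω') :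
    elev H ω ≤ elev H ω' := by
  obtain ⟨a, ha⟩ := List.exists_mem_of_ne_nil ω hne
  exact csSup_le_csSup (ω'.finite_toSet.image H).bddAbove ⟨H a, a, ha, rfl⟩
    (Set.image_mono (f := H) h)

lemma aux_elev_singleton (x : X) : elev H [x] = H x := by
  have : {z | z ∈ [x]} = ({x} : Set X) := by ext z; simp
  rw [elev, this, Set.image_singleton, csSup_singleton]

lemma aux_isPath_singleton (x : X) : IsPath q [x] x x :=
  ⟨by simp, List.isChain_singleton x, rfl, rfl⟩

lemma aux_commE_self_le [Fintype X] (x : X) : commE H q x x ≤ H x := by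
  have := aux_commE_le H q (aux_isPath_singleton q x)
  rwa [aux_elev_singleton] at this

lemma aux_commE_mem_le [Fintype X] {x y z : X} {ω : List X} (h : IsPath q ω x y)
    (hz : z ∈ ω) : commE H q x z ≤ elev H ω := by
  obtain ⟨s, t, rfl⟩ := List.append_of_mem hz
  have hpath : IsPath q (s ++ [z]) x z := by
    refine ⟨by simp, h.2.1.prefix ⟨t, by simp⟩, ?_, List.getLast?_concat⟩
    have := h.2.2.1
    cases s <;> simp_all
  calc commE H q x z ≤ elev H (s ++ [z]) := aux_commE_le H q hpath
    _ ≤ elev H (s ++ z :: t) := aux_elev_mono H (by simp) (by intro w hw; simp at hw ⊢; tauto)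

lemma aux_H_left_le [Fintype X] (hirr : ∀ x y : X, ∃ ω, IsPath q ω x y) (x y : X) :
    H x ≤ commE H q x y := by
  obtain ⟨ω, hp, he⟩ := aux_commE_exists H q hirr x y
  rw [← he]
  exact aux_le_elev H (List.mem_of_mem_head? (by rw [hp.2.2.1]; simp))

lemma aux_H_right_le [Fintype X] (hirr : ∀ x y : X, ∃ ω, IsPath q ω x y) (x y : X) :
    H y ≤ commE H q x y := by
  obtain ⟨ω, hp, he⟩ := aux_commE_exists H q hirr x y
  rw [← he]
  exact aux_le_elev H (List.mem_of_mem_getLast? (by rw [hp.2.2.2]; simp))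

lemma aux_path_reverse (hsymm : ∀ a b, q a b → q b a) {ω : List X} {x y : X}
    (h : IsPath q ω x y) : IsPath q ω.reverse y x := by
  refine ⟨by simp [h.1], ?_, by rw [List.head?_reverse, h.2.2.2],
    by rw [List.getLast?_reverse, h.2.2.1]⟩
  show List.IsChain q ω.reverse
  rw [List.isChain_reverse]
  exact h.2.1.imp (fun a b hab => hsymm a b hab)

lemma aux_path_trans {ω₁ ω₂ : List X} {u v w : X}
    (h₁ : IsPath q ω₁ u v) (h₂ : IsPath q ω₂ v w) :
    ∃ ω, IsPath q ω u w ∧ ∀ z ∈ ω, z ∈ ω₁ ∨ z ∈ ω₂ := by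
  obtain ⟨hne₂, hc₂, hh₂, hl₂⟩ := h₂
  obtain ⟨t, rfl⟩ : ∃ t, ω₂ = v :: t := by
    cases ω₂ with
    | nil => simp at hne₂
    | cons a t => simp at hh₂; exact ⟨t, by rw [hh₂]⟩
  refine ⟨ω₁ ++ t, ⟨by simp [h₁.1], ?_, ?_, ?_⟩, ?_⟩
  · show List.IsChain q (ω₁ ++ t)
    rw [List.isChain_append]
    refine ⟨h₁.2.1, hc₂.tail, ?_⟩
    intro a ha b hb
    rw [h₁.2.2.2] at ha; simp at ha; subst ha
    exact (List.isChain_cons.1 hc₂).1 b hb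
  · cases ω₁ with
    | nil => exact absurd rfl h₁.1
    | cons a s => simpa using h₁.2.2.1
  · cases t with
    | nil =>
      simp only [List.append_nil]
      rw [h₁.2.2.2]; simpa using hl₂
    | cons b s =>
      rw [List.getLast?_append]
      simp at hl₂ ⊢
      simp [hl₂]
  · intro z hz; simp at hz ⊢; tauto

lemma aux_path_cross (C : Set X) :
    ∀ (ω : List X) (x y : X), IsPath q ω x y → x ∈ C → y ∉ C →
      ∃ w ∈ ω, w ∈ extBdry q C := by
  intro ω
  induction ω with
  | nil => intro x y h; exact absurd rfl h.1
  | cons a l ih =>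
    intro x y h hxC hyC
    have hax : a = x := by have := h.2.2.1; simpa using this
    subst hax
    cases l with
    | nil =>
      have : a = y := by have := h.2.2.2; simpa using this
      subst this; exact absurd hxC hyC
    | cons b l' =>
      by_cases hbC : b ∈ C
      · obtain ⟨w, hw, hwb⟩ := ih b y
          ⟨by simp, h.2.1.tail, rfl, by have := h.2.2.2; simpa using this⟩ hbC hyC
        exact ⟨w, by simp [hw], hwb⟩
      · refine ⟨b, by simp, hbC, a, hxC, ?_⟩
        have := h.2.1
        change List.IsChain q (a :: b :: l') at this
        rw [List.isChain_cons_cons] at this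
        exact this.1

end AuxEnergy

/-- the relevant cycle `C^+_A(x)` (the minimal cycle strictly containing
the initial cycle `C_A(x)`) equals `{ y : Φ(x,y) ≤ Φ(x,A) }`. -/
theorem relevant_cycle_characterization [Fintype X] (H : X → ℝ) (q : X → X → Prop)
    (hsymm : ∀ x y, q x y → q y x)
    (hirr : ∀ x y : X, ∃ ω, IsPath q ω x y)
    (A : Set X) (hA : A.Nonempty) (x : X) (hx : x ∉ A)
    (Cp : Set X) (hcyc : IsCycle H q Cp)
    (hsub : initCycle H q A x ⊂ Cp)
    (hmin : ∀ C', IsCycle H q C' → initCycle H q A x ⊂ C' → Cp ⊆ C') :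
    Cp = {y | commE H q x y ≤ commA H q x A} := by
  classical
  set a := commA H q x A with ha
  set S : Set X := {y | commE H q x y ≤ a} with hS
  -- the defining set of commA is the image of A, finite and nonempty
  have hAset : {e | ∃ y ∈ A, commE H q x y = e} = (commE H q x) '' A := by
    ext e; simp [Set.mem_image]
  have hAfin : {e | ∃ y ∈ A, commE H q x y = e}.Finite := by
    rw [hAset]; exact (A.toFinite.image _)
  have hAne : {e | ∃ y ∈ A, commE H q x y = e}.Nonempty := by
    obtain ⟨y, hy⟩ := hA; exact ⟨commE H q x y, y, hy, rfl⟩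
  obtain ⟨ystar, hyA, hystar⟩ : ∃ y ∈ A, commE H q x y = a := hAne.csInf_mem hAfin
  have h_a_le : ∀ y ∈ A, a ≤ commE H q x y := fun y hy =>
    csInf_le hAfin.bddBelow ⟨y, hy, rfl⟩
  -- x ∈ S
  have hHx_le_a : H x ≤ a := by rw [← hystar]; exact aux_H_left_le H q hirr x ystar
  have hxS : x ∈ S := by
    show commE H q x x ≤ a
    exact le_trans (aux_commE_self_le H q x) hHx_le_a
  -- initCycle ⊂ S
  have hIS : initCycle H q A x ⊆ S := by
    rintro z (rfl | hz)
    · exact hxS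
    · show commE H q x z ≤ a
      simp only [Set.mem_setOf_eq, ← ha] at hz
      exact le_of_lt hz
  have hyI : ystar ∉ initCycle H q A x := by
    rintro (rfl | hz)
    · exact hx hyA
    · simp only [Set.mem_setOf_eq, ← ha] at hz
      rw [hystar] at hz; exact lt_irrefl _ hz
  have hIsS : initCycle H q A x ⊂ S :=
    ⟨hIS, fun h => hyI (h (by simp only [hS, Set.mem_setOf_eq, hystar, le_refl]))⟩
  -- internal path structure of S
  have hinner : ∀ y ∈ S, ∃ ω, IsPath q ω x y ∧ elev H ω ≤ a ∧ ∀ z ∈ ω, z ∈ S := by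
    intro y hy
    obtain ⟨ω, hp, he⟩ := aux_commE_exists H q hirr x y
    have helev : elev H ω ≤ a := by rw [he]; exact hy
    exact ⟨ω, hp, helev, fun z hz => le_trans (aux_commE_mem_le H q hp hz) helev⟩
  -- Cp is a nontrivial cycle
  have hxI : x ∈ initCycle H q A x := Or.inl rfl
  have hxCp : x ∈ Cp := hsub.1 hxI
  have hCpnt : IsNontrivialCycle H q Cp := by
    rcases hcyc with ⟨c, rfl⟩ | h
    · exfalso
      have hxc : x = c := hsub.1 hxI
      exact hsub.2 (by rintro z rfl; exact hxc ▸ hxI)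
    · exact h
  obtain ⟨hCpne, hCpconn, hCplt⟩ := hCpnt
  -- S ⊆ Cp
  obtain ⟨w, hwCp, hwI⟩ : ∃ w, w ∈ Cp ∧ w ∉ initCycle H q A x := Set.exists_of_ssubset hsub
  have h_a_le_w : a ≤ commE H q x w := by
    by_contra hlt; push_neg at hlt; exact hwI (Or.inr hlt)
  have hMw : commE H q x w ≤ sSup (H '' Cp) := by
    obtain ⟨ω, hp, hin⟩ := hCpconn x hxCp w hwCp
    refine le_trans (aux_commE_le H q hp) ?_
    exact csSup_le_csSup ((Cp.toFinite).image H).bddAbove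
      (by obtain ⟨u, hu⟩ := List.exists_mem_of_ne_nil ω hp.1; exact ⟨H u, u, hu, rfl⟩)
      (Set.image_mono (f := H) hin)
  have haM : a ≤ sSup (H '' Cp) := le_trans h_a_le_w hMw
  have hScp : S ⊆ Cp := by
    intro y hy
    by_contra hyCp
    obtain ⟨ω, hp, he⟩ := aux_commE_exists H q hirr x y
    obtain ⟨z, hzω, hzB⟩ := aux_path_cross q Cp ω x y hp hxCp hyCp
    have h1 : sInf (H '' extBdry q Cp) ≤ H z :=
      csInf_le (((extBdry q Cp).toFinite).image H).bddBelow ⟨z, hzB, rfl⟩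
    have h2 : H z ≤ commE H q x y := by rw [← he]; exact aux_le_elev H hzω
    have h3 : commE H q x y ≤ a := hy
    linarith
  -- Cp ⊆ S
  by_cases hSX : S = Set.univ
  · refine Set.Subset.antisymm (fun y _ => ?_) hScp
    rw [hSX]; trivial
  · obtain ⟨y₀, hy₀⟩ : ∃ y₀, y₀ ∉ S := by
      by_contra h; push_neg at h
      exact hSX (Set.eq_univ_of_forall h)
    obtain ⟨ω₀, hp₀⟩ := hirr x y₀
    obtain ⟨z₀, hz₀ω, hz₀B⟩ := aux_path_cross q S ω₀ x y₀ hp₀ hxS hy₀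
    -- S is connected
    have hconnS : SetConn q S := by
      intro u hu v hv
      obtain ⟨ω₁, hp₁, _, hin₁⟩ := hinner u hu
      obtain ⟨ω₂, hp₂, _, hin₂⟩ := hinner v hv
      obtain ⟨ω, hp, hmem⟩ := aux_path_trans q (aux_path_reverse q hsymm hp₁) hp₂
      refine ⟨ω, hp, fun z hz => ?_⟩
      rcases hmem z hz with h | h
      · exact hin₁ z (by simpa using h)
      · exact hin₂ z h
    -- boundary energies are above a
    have hb_gt : ∀ w' ∈ extBdry q S, a < H w' := by
      rintro w' ⟨hwS, z, hzS, hqzw⟩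
      by_contra hle; push_neg at hle
      obtain ⟨ω, hp, helev, _⟩ := hinner z hzS
      have hpath : IsPath q (ω ++ [w']) x w' := by
        refine ⟨by simp, ?_, ?_, List.getLast?_concat⟩
        · show List.IsChain q (ω ++ [w'])
          rw [List.isChain_append]
          refine ⟨hp.2.1, List.isChain_singleton w', ?_⟩
          intro a' ha' b hb
          rw [hp.2.2.2] at ha'; simp at ha' hb; subst ha'; subst hb
          exact hqzw
        · cases ω with
          | nil => exact absurd rfl hp.1
          | cons c l => simpa using hp.2.2.1
      have helev' : elev H (ω ++ [w']) ≤ a := by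
        refine csSup_le ⟨H w', w', by simp, rfl⟩ ?_
        rintro e ⟨u, hu, rfl⟩
        simp only [Set.mem_setOf_eq, List.mem_append, List.mem_singleton] at hu
        rcases hu with hu | rfl
        · exact le_trans (aux_le_elev H hu) helev
        · exact hle
      exact hwS (le_trans (aux_commE_le H q hpath) helev')
    -- S is a nontrivial cycle
    have hSnt : IsNontrivialCycle H q S := by
      refine ⟨⟨x, hxS⟩, hconnS, ?_⟩
      have h1 : sSup (H '' S) ≤ a := by
        refine csSup_le ⟨H x, x, hxS, rfl⟩ ?_
        rintro e ⟨u, hu, rfl⟩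
        exact le_trans (aux_H_right_le H q hirr x u) hu
      have h2 : a < sInf (H '' extBdry q S) := by
        have hBne : (H '' extBdry q S).Nonempty := ⟨H z₀, z₀, hz₀B, rfl⟩
        obtain ⟨u, hu, heq⟩ := hBne.csInf_mem (((extBdry q S).toFinite).image H)
        rw [← heq]
        exact hb_gt u hu
      linarith
    exact Set.Subset.antisymm (hmin S (Or.inr hSnt) hIsS) hScp
end
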